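/- Let θ be irrational with convergents 𝒫ᵢ = (pᵢ, qᵢ) and let φ = (rθ + m)/n be in reduced form. For a nonzero integer S, set λ(S) = |S − r/n|·‖Sθ − φ‖ and let R be the nearest integer to Sθ − φ. If 0 < n²·λ(S) < 1/2, then there exist integers i ≥ −1 and g with g invertible modulo n such that (m + Rn, Sn − r) = g·𝒫ᵢ and n²·λ(S) = g²/μᵢ, where μᵢ = [b_{i+1}; b_{i+2}, …] + [0; bᵢ, …, b₁]. -/

import Mathlib

open Filter Topology

/-- Distance from a real number to the nearest integer. -/
noncomputable def distNearestInt (x : ℝ) : ℝ := |x - round x|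

section auxKL
variable (b P Q : ℕ → ℤ)
variable (hb : ∀ i : ℕ, 1 ≤ i → 1 ≤ b i)
variable (hP0 : P 0 = 1) (hQ0 : Q 0 = 0) (hP1 : P 1 = b 0) (hQ1 : Q 1 = 1)
variable (hPrec : ∀ k, P (k+2) = b (k+1) * P (k+1) + P k)
variable (hQrec : ∀ k, Q (k+2) = b (k+1) * Q (k+1) + Q k)

include hb hQ0 hQ1 hQrec in
lemma auxKL_Q_pos : ∀ k, 0 ≤ Q k ∧ 1 ≤ Q (k+1) := by
  intro k
  induction k with
  | zero => simp [hQ0, hQ1]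
  | succ k ih =>
    refine ⟨le_trans one_pos.le ih.2, ?_⟩
    rw [hQrec k]
    have h1 := hb (k+1) (by omega)
    nlinarith [ih.1, ih.2]

include hb hQ0 hQ1 hQrec in
lemma auxKL_Q_lower : ∀ k : ℕ, (k : ℤ) ≤ Q (k+1) := by
  have key : ∀ k : ℕ, (k : ℤ) ≤ Q (k+1) ∧ ((k:ℤ)+1) ≤ Q (k+2) := by
    intro k
    induction k with
    | zero =>
      constructor
      · simp [hQ1]
      · rw [hQrec 0, hQ0, hQ1]
        have := hb 1 (by omega); push_cast; omega
    | succ k ih =>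
      refine ⟨by push_cast; exact_mod_cast ih.2, ?_⟩
      have hrw : Q (k+1+2) = b (k+2) * Q (k+2) + Q (k+1) := hQrec (k+1)
      rw [hrw]
      have h1 := hb (k+2) (by omega)
      have h2 := (auxKL_Q_pos b Q hb hQ0 hQ1 hQrec (k+1)).2
      have h4 := (auxKL_Q_pos b Q hb hQ0 hQ1 hQrec k).2
      have h3 := ih.2
      push_cast at *
      nlinarith
  exact fun k => (key k).1

include hP0 hQ0 hP1 hQ1 hPrec hQrec in
lemma auxKL_det : ∀ k, P (k+1) * Q k - P k * Q (k+1) = (-1)^(k+1) := by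
  intro k
  induction k with
  | zero => rw [hP0, hQ0, hP1, hQ1]; ring
  | succ k ih =>
    rw [hPrec k, hQrec k, pow_succ]
    linear_combination (-1 : ℤ) * ih

variable (θ : ℝ)

include hb hP0 hQ0 hP1 hQ1 hPrec hQrec in
lemma auxKL_theta_between
    (hconv : Tendsto (fun k : ℕ => (P (k+1) : ℝ) / (Q (k+1) : ℝ)) atTop (nhds θ)) :
    ∀ k : ℕ, (0:ℝ) < (-1)^k * (θ - (P (k+1) : ℝ) / (Q (k+1) : ℝ)) := by
  have hQpos : ∀ k : ℕ, (0:ℝ) < (Q (k+1) : ℝ) := by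
    intro k
    have h := (auxKL_Q_pos b Q hb hQ0 hQ1 hQrec k).2
    exact_mod_cast lt_of_lt_of_le one_pos h
  have step : ∀ k : ℕ, (0:ℝ) <
      (-1)^k * ((P (k+3) : ℝ)/(Q (k+3) : ℝ) - (P (k+1):ℝ)/(Q (k+1) : ℝ)) := by
    intro k
    have h1 := hQpos k
    have h3 := hQpos (k+2)
    have hd := auxKL_det b P Q hP0 hQ0 hP1 hQ1 hPrec hQrec (k+1)
    have hnum : (P (k+3) * Q (k+1) - P (k+1) * Q (k+3) : ℤ) = b (k+2) * (-1)^k := by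
      rw [hPrec (k+1), hQrec (k+1)]
      linear_combination (b (k+2)) * hd
    have hnumR : ((P (k+3)):ℝ) * (Q (k+1):ℝ) - (P (k+1):ℝ) * (Q (k+3):ℝ)
        = (b (k+2):ℝ) * (-1)^k := by exact_mod_cast hnum
    have hb2 : (1:ℝ) ≤ (b (k+2) : ℝ) := by exact_mod_cast hb (k+2) (by omega)
    have hsq : (-1:ℝ)^k * (-1)^k = 1 := by
      rw [← pow_add]; exact Even.neg_one_pow ⟨k, rfl⟩
    have key : (P (k+3) : ℝ)/(Q (k+3):ℝ) - (P (k+1):ℝ)/(Q (k+1):ℝ)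
        = (b (k+2) : ℝ) * (-1)^k / ((Q (k+1):ℝ) * (Q (k+3):ℝ)) := by
      rw [div_sub_div _ _ (ne_of_gt h3) (ne_of_gt h1)]
      rw [div_eq_div_iff (by positivity) (by positivity)]
      linear_combination (Q (k+1):ℝ) * (Q (k+3):ℝ) * hnumR
    rw [key]
    have heq : (-1:ℝ)^k * ((b (k+2):ℝ) * (-1)^k / ((Q (k+1):ℝ) * (Q (k+3):ℝ)))
        = (b (k+2):ℝ) / ((Q (k+1):ℝ) * (Q (k+3):ℝ)) := by
      field_simp
      linear_combination hsq
    rw [heq]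
    positivity
  have mono : ∀ k j : ℕ, (-1:ℝ)^k * ((P (k+1):ℝ)/(Q (k+1):ℝ))
      ≤ (-1:ℝ)^k * ((P (k+2*j+1):ℝ)/(Q (k+2*j+1):ℝ)) := by
    intro k j
    induction j with
    | zero => simp
    | succ j ih =>
      have hs := step (k+2*j)
      have hpow : ((-1:ℝ))^(k+2*j) = (-1)^k := by
        rw [pow_add, pow_mul]; norm_num
      rw [hpow] at hs
      have hidx : k+2*(j+1)+1 = k+2*j+3 := by omega
      rw [hidx]
      nlinarith [ih, hs]
  intro k
  have hmap : Tendsto (fun j : ℕ => k+2+2*j) atTop atTop :=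
    tendsto_atTop_mono (f := fun j : ℕ => j)
      (fun j => show j ≤ k+2+2*j by omega) tendsto_id
  have hlim := (hconv.comp hmap).const_mul ((-1:ℝ)^k)
  have hge : (-1:ℝ)^k * ((P (k+3):ℝ)/(Q (k+3):ℝ)) ≤ (-1:ℝ)^k * θ := by
    refine ge_of_tendsto' hlim (fun j => ?_)
    have h := mono (k+2) j
    have hpow : ((-1:ℝ))^(k+2) = (-1)^k := by rw [pow_add]; norm_num
    rw [hpow] at h
    exact h
  have hs := step k
  nlinarith [hs, hge]

variable (hQpos : ∀ k : ℕ, (0:ℝ) < (Q (k+1) : ℝ))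
variable (hbet : ∀ k : ℕ, (0:ℝ) < (-1)^k * (θ - (P (k+1) : ℝ) / (Q (k+1) : ℝ)))
variable (hdet : ∀ k, P (k+1) * Q k - P k * Q (k+1) = (-1)^(k+1))

include hQ0 hP0 hQpos hbet in
lemma auxKL_E_sign : ∀ k : ℕ, (-1:ℝ)^k * ((Q k : ℝ) * θ - (P k : ℝ)) < 0 := by
  intro k
  cases k with
  | zero => rw [hQ0, hP0]; norm_num
  | succ k =>
    have h := hbet k
    have hQ := hQpos k
    have e : θ - (P (k+1):ℝ)/(Q (k+1):ℝ)
        = ((Q (k+1):ℝ)*θ - (P (k+1):ℝ))/(Q (k+1):ℝ) := by field_simp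
    rw [e] at h
    have h4 := mul_pos hQ h
    have h3 : (Q (k+1):ℝ) * ((-1:ℝ)^k * (((Q (k+1):ℝ)*θ - (P (k+1):ℝ))/(Q (k+1):ℝ)))
        = (-1:ℝ)^k * ((Q (k+1):ℝ)*θ - (P (k+1):ℝ)) := by field_simp
    rw [h3] at h4
    have h5 : (-1:ℝ)^(k+1) * ((Q (k+1):ℝ)*θ - (P (k+1):ℝ))
        = -((-1:ℝ)^k * ((Q (k+1):ℝ)*θ - (P (k+1):ℝ))) := by rw [pow_succ]; ring
    rw [h5]; linarith

include hQ0 hP0 hQpos in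
lemma auxKL_E_ne (hθ : Irrational θ) : ∀ k : ℕ, (Q k : ℝ) * θ - (P k : ℝ) ≠ 0 := by
  intro k
  cases k with
  | zero => rw [hQ0, hP0]; norm_num
  | succ k =>
    intro h
    have hQ := hQpos k
    have hθ' : θ = (((P (k+1) : ℚ) / (Q (k+1) : ℚ) : ℚ) : ℝ) := by
      push_cast
      field_simp
      linarith [h]
    rw [hθ'] at hθ
    exact Rat.not_irrational _ hθ

include hb hP0 hQ0 hP1 hQ1 hPrec hQrec hQpos in
lemma auxKL_t (hθ : Irrational θ) (t : ℤ → ℝ) (ht0 : t 0 = θ)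
    (htrec : ∀ i : ℕ, t ((i : ℤ) + 1) = (t i - b i)⁻¹) :
    ∀ k : ℕ, t ((k : ℤ) + 1)
      = -((Q k : ℝ) * θ - (P k : ℝ)) / ((Q (k+1) : ℝ) * θ - (P (k+1) : ℝ)) := by
  have hEne := auxKL_E_ne P Q hP0 hQ0 θ hQpos hθ
  intro k
  induction k with
  | zero =>
    have h := htrec 0
    norm_num at h
    rw [show ((0:ℕ):ℤ) + 1 = 1 by norm_num, h, ht0, hQ0, hP0]
    rw [show (0:ℕ)+1 = 1 from rfl, hQ1, hP1]
    push_cast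
    rw [inv_eq_one_div]
    norm_num
  | succ k ih =>
    have h := htrec (k+1)
    have hc : ((k+1 : ℕ) : ℤ) = (k : ℤ) + 1 := by push_cast; ring
    rw [hc] at h
    rw [show k+1+1 = k+2 from rfl, hc, h, ih]
    have e2 : (Q (k+2) : ℝ) * θ - (P (k+2) : ℝ)
        = (b (k+1) : ℝ) * ((Q (k+1) : ℝ) * θ - (P (k+1) : ℝ)) + ((Q k : ℝ) * θ - (P k : ℝ)) := by
      rw [hPrec k, hQrec k]; push_cast; ring
    have h1 : -((Q k : ℝ) * θ - (P k : ℝ)) / ((Q (k+1) : ℝ) * θ - (P (k+1) : ℝ)) - (b (k+1) : ℝ)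
        = -((Q (k+2) : ℝ) * θ - (P (k+2) : ℝ)) / ((Q (k+1) : ℝ) * θ - (P (k+1) : ℝ)) := by
      rw [e2]
      rw [eq_div_iff (hEne (k+1)), sub_mul, div_mul_cancel₀ _ (hEne (k+1))]
      ring
    rw [h1, inv_div]
    rw [div_neg, neg_div]

include hb hP0 hQ0 hP1 hQ1 hPrec hQrec hdet hQpos in
lemma auxKL_mu (hθ : Irrational θ) (t : ℤ → ℝ) (ht0 : t 0 = θ)
    (htrec : ∀ i : ℕ, t ((i : ℤ) + 1) = (t i - b i)⁻¹) :
    ∀ k : ℕ, (t ((k : ℤ) + 1) + (Q k : ℝ)/(Q (k+1) : ℝ))⁻¹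
      = (-1:ℝ)^k * (Q (k+1) : ℝ) * ((Q (k+1) : ℝ) * θ - (P (k+1) : ℝ)) := by
  intro k
  have hEne := auxKL_E_ne P Q hP0 hQ0 θ hQpos hθ
  rw [auxKL_t b P Q hb hP0 hQ0 hP1 hQ1 hPrec hQrec θ hQpos hθ t ht0 htrec k]
  have hQ := hQpos k
  have hE := hEne (k+1)
  have hdR : (P (k+1):ℝ) * (Q k:ℝ) - (P k:ℝ) * (Q (k+1):ℝ) = (-1:ℝ)^(k+1) := by
    exact_mod_cast hdet k
  have hsq : (-1:ℝ)^k * (-1:ℝ)^k = 1 := by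
    rw [← pow_add]; exact Even.neg_one_pow ⟨k, rfl⟩
  have hsum : -((Q k : ℝ) * θ - (P k:ℝ)) / ((Q (k+1) : ℝ) * θ - (P (k+1):ℝ))
        + (Q k : ℝ)/(Q (k+1) : ℝ)
      = (-1:ℝ)^k / ((Q (k+1):ℝ) * ((Q (k+1) : ℝ) * θ - (P (k+1):ℝ))) := by
    rw [div_add_div _ _ hE hQ.ne', div_eq_div_iff (by positivity) (by positivity)]
    linear_combination (-(Q (k+1):ℝ)*((Q (k+1):ℝ)*θ - (P (k+1):ℝ))) * hdR
  rw [hsum, inv_div, div_eq_iff (by positivity : ((-1:ℝ)^k) ≠ 0)]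
  linear_combination (-((Q (k+1):ℝ) * ((Q (k+1) : ℝ) * θ - (P (k+1):ℝ)))) * hsq

end auxKL

/-- Key Lemma: let θ be irrational with convergents `𝒫ᵢ = (pᵢ, qᵢ)` (indexed by
`ℤ`, with `𝒫₋₁ = (1,0)`), `φ = (rθ+m)/n` in reduced form, `S` a nonzero integer,
`R` the nearest integer to `Sθ − φ`, and `λ(S) = |S − r/n|·‖Sθ − φ‖`.  If
`0 < n²·λ(S) < 1/2`, then there are integers `i ≥ −1` and `g` with `g`
invertible mod `n`, such that `(m + Rn, Sn − r) = g·𝒫ᵢ` and `n²·λ(S) = g²/μᵢ`,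
where `μᵢ = t (i+1) + q_{i-1}/qᵢ` and `t` is the sequence of complete quotients. -/
theorem key_lemma_reduced_form
    (θ : ℝ) (hθ : Irrational θ)
    (b : ℕ → ℤ) (hb : ∀ i : ℕ, 1 ≤ i → 1 ≤ b i)
    (p q : ℤ → ℤ)
    (hpm1 : p (-1) = 1) (hqm1 : q (-1) = 0)
    (hp0 : p 0 = b 0) (hq0 : q 0 = 1)
    (hprec : ∀ i : ℕ, p ((i : ℤ) + 1) = b (i + 1) * p i + p ((i : ℤ) - 1))
    (hqrec : ∀ i : ℕ, q ((i : ℤ) + 1) = b (i + 1) * q i + q ((i : ℤ) - 1))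
    (hconv : Filter.Tendsto (fun i : ℕ => (p i : ℝ) / (q i : ℝ)) Filter.atTop (nhds θ))
    (t : ℤ → ℝ) (ht0 : t 0 = θ) (htrec : ∀ i : ℕ, t ((i : ℤ) + 1) = (t i - b i)⁻¹)
    -- φ = (rθ + m)/n in reduced form
    (n : ℕ) (hn : 2 ≤ n) (r m : ℤ)
    (hr : 0 ≤ r ∧ r < n) (hm : 0 ≤ m ∧ m < n)
    (hgcd : Int.gcd r (Int.gcd m n) = 1)
    (φ : ℝ) (hφ : φ = (r * θ + m) / n)
    (S : ℤ) (hS : S ≠ 0)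
    (R : ℤ) (hR : R = round ((S : ℝ) * θ - φ))
    (lam : ℝ) (hlam : lam = |(S : ℝ) - (r : ℝ) / n| * distNearestInt ((S : ℝ) * θ - φ))
    (hsmall : 0 < (n : ℝ) ^ 2 * lam ∧ (n : ℝ) ^ 2 * lam < 1 / 2) :
    ∃ i : ℤ, -1 ≤ i ∧ ∃ g : ℤ, IsUnit (g : ZMod n) ∧
      m + R * n = g * p i ∧ S * n - r = g * q i ∧
      (n : ℝ) ^ 2 * lam = (g : ℝ) ^ 2 * (t (i + 1) + (q (i - 1) : ℝ) / (q i : ℝ))⁻¹ := by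
  classical
  -- shifted sequences
  set P : ℕ → ℤ := fun k => p ((k : ℤ) - 1) with hPdef
  set Q : ℕ → ℤ := fun k => q ((k : ℤ) - 1) with hQdef
  have hP0 : P 0 = 1 := by
    show p (((0:ℕ) : ℤ) - 1) = 1
    rw [show ((0:ℕ):ℤ) - 1 = (-1 : ℤ) by norm_num]; exact hpm1
  have hQ0 : Q 0 = 0 := by
    show q (((0:ℕ) : ℤ) - 1) = 0
    rw [show ((0:ℕ):ℤ) - 1 = (-1 : ℤ) by norm_num]; exact hqm1
  have hP1 : P 1 = b 0 := by
    show p (((1:ℕ) : ℤ) - 1) = b 0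
    rw [show ((1:ℕ):ℤ) - 1 = (0 : ℤ) by norm_num]; exact hp0
  have hQ1 : Q 1 = 1 := by
    show q (((1:ℕ) : ℤ) - 1) = 1
    rw [show ((1:ℕ):ℤ) - 1 = (0 : ℤ) by norm_num]; exact hq0
  have hPs : ∀ k : ℕ, P (k+1) = p (k : ℤ) := by
    intro k; show p (((k+1:ℕ):ℤ) - 1) = p (k:ℤ); congr 1; push_cast; ring
  have hQs : ∀ k : ℕ, Q (k+1) = q (k : ℤ) := by
    intro k; show q (((k+1:ℕ):ℤ) - 1) = q (k:ℤ); congr 1; push_cast; ring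
  have hPm : ∀ k : ℕ, P (k+2) = p ((k:ℤ)+1) := by
    intro k; show p (((k+2:ℕ):ℤ) - 1) = p ((k:ℤ)+1); congr 1; push_cast; ring
  have hQm : ∀ k : ℕ, Q (k+2) = q ((k:ℤ)+1) := by
    intro k; show q (((k+2:ℕ):ℤ) - 1) = q ((k:ℤ)+1); congr 1; push_cast; ring
  have hPrec : ∀ k, P (k+2) = b (k+1) * P (k+1) + P k := by
    intro k
    rw [hPm k, hPs k, hprec k]
  have hQrec : ∀ k, Q (k+2) = b (k+1) * Q (k+1) + Q k := by
    intro k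
    rw [hQm k, hQs k, hqrec k]
  have hconv' : Tendsto (fun k : ℕ => (P (k+1) : ℝ) / (Q (k+1) : ℝ)) atTop (nhds θ) := by
    have he : (fun k : ℕ => (P (k+1) : ℝ) / (Q (k+1) : ℝ))
        = fun i : ℕ => (p (i:ℤ) : ℝ) / (q (i:ℤ) : ℝ) := by
      funext k; rw [hPs k, hQs k]
    rw [he]; exact hconv
  -- instantiate aux lemmas
  have hQposZ := auxKL_Q_pos b Q hb hQ0 hQ1 hQrec
  have hQpos : ∀ k : ℕ, (0:ℝ) < (Q (k+1) : ℝ) := by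
    intro k; have := (hQposZ k).2; exact_mod_cast lt_of_lt_of_le one_pos this
  have hdet := auxKL_det b P Q hP0 hQ0 hP1 hQ1 hPrec hQrec
  have hbet := auxKL_theta_between b P Q hb hP0 hQ0 hP1 hQ1 hPrec hQrec θ hconv'
  have hEsign := auxKL_E_sign P Q hP0 hQ0 θ hQpos hbet
  have hEne := auxKL_E_ne P Q hP0 hQ0 θ hQpos hθ
  have hmu := auxKL_mu b P Q hb hP0 hQ0 hP1 hQ1 hPrec hQrec θ hQpos hdet hθ t ht0 htrec
  -- the integers A, B
  set A : ℤ := S * (n:ℤ) - r with hAdef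
  set B : ℤ := m + R * (n:ℤ) with hBdef
  clear_value A B
  have hn0 : (0:ℝ) < (n:ℝ) := by
    have : 0 < n := by omega
    exact_mod_cast this
  have hAR : (A : ℝ) = (S:ℝ) * (n:ℝ) - (r:ℝ) := by rw [hAdef]; push_cast; ring
  have hBR : (B : ℝ) = (m:ℝ) + (R:ℝ) * (n:ℝ) := by rw [hBdef]; push_cast; ring
  have key1 : (n : ℝ) ^ 2 * lam = |(A:ℝ)| * |(A:ℝ) * θ - (B:ℝ)| := by
    have e1 : (S:ℝ) - (r:ℝ)/(n:ℝ) = (A:ℝ)/(n:ℝ) := by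
      rw [hAR]; field_simp
    have e2 : (S:ℝ) * θ - φ - (R:ℝ) = ((A:ℝ) * θ - (B:ℝ))/(n:ℝ) := by
      rw [hφ, hAR, hBR]; field_simp; ring
    rw [hlam, distNearestInt, ← hR, e1]
    rw [show (S:ℝ) * θ - φ - (R:ℝ) = ((A:ℝ) * θ - (B:ℝ))/(n:ℝ) from e2]
    rw [abs_div, abs_div, abs_of_pos hn0]
    field_simp
  have hprodpos : 0 < |(A:ℝ)| * |(A:ℝ) * θ - (B:ℝ)| := key1 ▸ hsmall.1
  have hhalf : |(A:ℝ)| * |(A:ℝ) * θ - (B:ℝ)| < 1/2 := key1 ▸ hsmall.2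
  have hAne : A ≠ 0 := by
    intro h
    rw [h] at hprodpos
    norm_num at hprodpos
  have hAabs1 : 1 ≤ |A| := Int.one_le_abs hAne
  -- choose k with Q (k+1) ≤ |A| < Q (k+2)
  have hex : ∃ j : ℕ, |A| < Q (j+2) := by
    refine ⟨A.natAbs, ?_⟩
    have h := auxKL_Q_lower b Q hb hQ0 hQ1 hQrec (A.natAbs + 1)
    rw [show A.natAbs+1+1 = A.natAbs+2 from rfl] at h
    have h2 : |A| = (A.natAbs : ℤ) := Int.abs_eq_natAbs A
    push_cast at h
    omega
  obtain ⟨k, hk1, hk2⟩ : ∃ k : ℕ, Q (k+1) ≤ |A| ∧ |A| < Q (k+2) := by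
    have hk2' := Nat.find_spec hex
    rcases Nat.eq_zero_or_pos (Nat.find hex) with hk0 | hkpos
    · refine ⟨0, ?_, ?_⟩
      · rw [show (0:ℕ)+1 = 1 from rfl, hQ1]; exact hAabs1
      · rw [hk0] at hk2'; exact hk2'
    · obtain ⟨j, hj⟩ : ∃ j, Nat.find hex = j+1 := ⟨Nat.find hex - 1, by omega⟩
      refine ⟨j+1, ?_, by rw [← hj]; exact hk2'⟩
      have h := Nat.find_min hex (show j < Nat.find hex by omega)
      rw [show j+1+1 = j+2 from rfl]
      exact not_lt.mp h
  -- decompose (B, A) in the basis (P (k+1), Q (k+1)), (P (k+2), Q (k+2))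
  set s : ℤ := (-1)^k with hsdef
  have hdet' : P (k+2) * Q (k+1) - P (k+1) * Q (k+2) = s := by
    rw [hsdef]
    have := hdet (k+1)
    rw [show k+1+1 = k+2 from rfl] at this
    rw [this]; ring
  have hss : s * s = 1 := by
    rw [hsdef, ← pow_add]; exact Even.neg_one_pow ⟨k, rfl⟩
  set X : ℤ := s * (A * P (k+2) - B * Q (k+2)) with hXdef
  set Y : ℤ := s * (B * Q (k+1) - A * P (k+1)) with hYdef
  have hXB : X * P (k+1) + Y * P (k+2) = B := by
    rw [hXdef, hYdef]
    linear_combination (s * B) * hdet' + B * hss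
  have hXA : X * Q (k+1) + Y * Q (k+2) = A := by
    rw [hXdef, hYdef]
    linear_combination (s * A) * hdet' + A * hss
  clear_value s X Y
  have hQ1pos : (0:ℤ) < Q (k+1) := lt_of_lt_of_le one_pos (hQposZ k).2
  have hQ2pos : (0:ℤ) < Q (k+2) := by
    have := (hQposZ (k+1)).2
    rw [show k+1+1 = k+2 from rfl] at this
    omega
  have hE1sign : (0:ℝ) < (-1:ℝ)^k * ((Q (k+1) : ℝ) * θ - (P (k+1) : ℝ)) := by
    have h := hEsign (k+1)
    have h5 : (-1:ℝ)^(k+1) * ((Q (k+1):ℝ)*θ - (P (k+1):ℝ))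
        = -((-1:ℝ)^k * ((Q (k+1):ℝ)*θ - (P (k+1):ℝ))) := by rw [pow_succ]; ring
    rw [h5] at h
    linarith
  have hE2sign : (-1:ℝ)^k * ((Q (k+2) : ℝ) * θ - (P (k+2) : ℝ)) < 0 := by
    have h := hEsign (k+2)
    have h5 : (-1:ℝ)^(k+2) * ((Q (k+2):ℝ)*θ - (P (k+2):ℝ))
        = (-1:ℝ)^k * ((Q (k+2):ℝ)*θ - (P (k+2):ℝ)) := by ring
    rw [h5] at h
    exact h
  by_cases hY : Y = 0
  · -- main case : (B, A) = X • (P (k+1), Q (k+1))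
    have hBX : B = X * P (k+1) := by rw [← hXB, hY]; ring
    have hAX : A = X * Q (k+1) := by rw [← hXA, hY]; ring
    have hX0 : X ≠ 0 := by
      intro h
      rw [h] at hAX
      simp at hAX
      exact hAne hAX
    -- coprimality of X and n
    have hXcop : Int.gcd X (n:ℤ) = 1 := by
      set d : ℕ := Int.gcd X (n:ℤ) with hddef
      have hdX : (d:ℤ) ∣ X := Int.gcd_dvd_left _ _
      have hdn : (d:ℤ) ∣ (n:ℤ) := Int.gcd_dvd_right _ _
      have hdA : (d:ℤ) ∣ A := hAX ▸ Dvd.dvd.mul_right hdX _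
      have hdB : (d:ℤ) ∣ B := hBX ▸ Dvd.dvd.mul_right hdX _
      have hdr : (d:ℤ) ∣ r := by
        have : r = S * (n:ℤ) - A := by rw [hAdef]; ring
        rw [this]
        exact dvd_sub (Dvd.dvd.mul_left hdn S) hdA
      have hdm : (d:ℤ) ∣ m := by
        have : m = B - R * (n:ℤ) := by rw [hBdef]; ring
        rw [this]
        exact dvd_sub hdB (Dvd.dvd.mul_left hdn R)
      have h1 : (d:ℤ) ∣ (Int.gcd m (n:ℤ) : ℤ) := Int.dvd_coe_gcd hdm hdn
      have h2 : (d:ℤ) ∣ (Int.gcd r (Int.gcd m (n:ℤ)) : ℤ) := Int.dvd_coe_gcd hdr h1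
      rw [hgcd] at h2
      norm_cast at h2
      exact Nat.dvd_one.mp h2
    have hXunit : IsUnit ((X : ℤ) : ZMod n) := by
      obtain ⟨u, v, huv⟩ := Int.isCoprime_iff_gcd_eq_one.mpr hXcop
      have hcast : ((u : ZMod n)) * ((X:ℤ) : ZMod n) = 1 := by
        have h := congrArg (fun z : ℤ => (z : ZMod n)) huv
        push_cast at h
        rw [ZMod.natCast_self] at h
        simpa using h
      exact IsUnit.of_mul_eq_one _ (by rwa [mul_comm] at hcast)
    refine ⟨(k:ℤ), by omega, X, hXunit, ?_, ?_, ?_⟩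
    · show B = X * p (k:ℤ)
      rw [← hPs k]; exact hBX
    · show A = X * q (k:ℤ)
      rw [← hQs k]; exact hAX
    · -- the measure identity
      have hq1 : q ((k:ℤ) - 1) = Q k := rfl
      rw [hq1, ← hQs k, hmu k, key1]
      have hARX : (A:ℝ) = (X:ℝ) * (Q (k+1):ℝ) := by exact_mod_cast hAX
      have hBRX : (B:ℝ) = (X:ℝ) * (P (k+1):ℝ) := by exact_mod_cast hBX
      rw [hARX, hBRX]
      have e3 : (X:ℝ) * (Q (k+1):ℝ) * θ - (X:ℝ) * (P (k+1):ℝ)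
          = (X:ℝ) * ((Q (k+1):ℝ) * θ - (P (k+1):ℝ)) := by ring
      rw [e3, abs_mul, abs_mul, abs_of_pos (hQpos k)]
      have habsE : |(Q (k+1):ℝ) * θ - (P (k+1):ℝ)|
          = (-1:ℝ)^k * ((Q (k+1):ℝ) * θ - (P (k+1):ℝ)) := by
        rw [← abs_of_pos hE1sign, abs_mul, abs_pow, abs_neg, abs_one, one_pow, one_mul]
      rw [habsE]
      linear_combination ((Q (k+1):ℝ) * ((-1:ℝ)^k) * ((Q (k+1):ℝ) * θ - (P (k+1):ℝ))) * sq_abs (X:ℝ)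
  · -- impossible case
    exfalso
    have hX0 : X ≠ 0 := by
      intro h
      rw [h] at hXA
      have hAY : A = Y * Q (k+2) := by rw [← hXA]; ring
      have h1 : 1 ≤ |Y| := Int.one_le_abs hY
      have h2 : |A| = |Y| * Q (k+2) := by
        rw [hAY, abs_mul, abs_of_pos hQ2pos]
      nlinarith [hk2]
    have hXY : X * Y < 0 := by
      rcases lt_trichotomy X 0 with hx | hx | hx
      · rcases lt_trichotomy Y 0 with hy | hy | hy
        · exfalso
          have h1 : -A = (-X) * Q (k+1) + (-Y) * Q (k+2) := by rw [← hXA]; ring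
          have h2 : -A ≤ |A| := neg_le_abs A
          have hx1 : (0:ℤ) ≤ -X := by omega
          have hy1 : (1:ℤ) ≤ -Y := by omega
          have p1 : 0 ≤ (-X) * Q (k+1) := mul_nonneg hx1 hQ1pos.le
          have p2 : Q (k+2) ≤ (-Y) * Q (k+2) := le_mul_of_one_le_left hQ2pos.le hy1
          linarith [hk2]
        · exact absurd hy hY
        · exact mul_neg_of_neg_of_pos hx hy
      · exact absurd hx hX0
      · rcases lt_trichotomy Y 0 with hy | hy | hy
        · exact mul_neg_of_pos_of_neg hx hy
        · exact absurd hy hY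
        · exfalso
          have h1 : A = X * Q (k+1) + Y * Q (k+2) := hXA.symm
          have h2 : A ≤ |A| := le_abs_self A
          have hx1 : (0:ℤ) ≤ X := by omega
          have hy1 : (1:ℤ) ≤ Y := by omega
          have p1 : 0 ≤ X * Q (k+1) := mul_nonneg hx1 hQ1pos.le
          have p2 : Q (k+2) ≤ Y * Q (k+2) := le_mul_of_one_le_left hQ2pos.le hy1
          linarith [hk2]
    -- |E1| ≤ |Aθ - B|
    set E1 : ℝ := (Q (k+1):ℝ) * θ - (P (k+1):ℝ) with hE1def
    set E2 : ℝ := (Q (k+2):ℝ) * θ - (P (k+2):ℝ) with hE2def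
    clear_value E1 E2
    have hsub : (A:ℝ) * θ - (B:ℝ) = (X:ℝ) * E1 + (Y:ℝ) * E2 := by
      have hARx : (A:ℝ) = (X:ℝ) * (Q (k+1):ℝ) + (Y:ℝ) * (Q (k+2):ℝ) := by
        exact_mod_cast hXA.symm
      have hBRx : (B:ℝ) = (X:ℝ) * (P (k+1):ℝ) + (Y:ℝ) * (P (k+2):ℝ) := by
        exact_mod_cast hXB.symm
      rw [hARx, hBRx, hE1def, hE2def]; ring
    have hE1E2 : E1 * E2 < 0 := by
      have h1 := mul_pos hE1sign (neg_pos.mpr hE2sign)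
      have hsq : (-1:ℝ)^k * (-1:ℝ)^k = 1 := by
        rw [← pow_add]; exact Even.neg_one_pow ⟨k, rfl⟩
      have h2 : ((-1:ℝ)^k * E1) * (-((-1:ℝ)^k * E2)) = -(E1*E2) := by
        linear_combination (-(E1*E2)) * hsq
      rw [h2] at h1
      linarith
    have hXYR : (X:ℝ) * (Y:ℝ) < 0 := by exact_mod_cast hXY
    have hX2 : (1:ℝ) ≤ (X:ℝ)^2 := by
      have h1 : 1 ≤ |X| := Int.one_le_abs hX0
      have h2 : (1:ℝ) ≤ |(X:ℝ)| := by exact_mod_cast h1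
      calc (1:ℝ) = 1^2 := by norm_num
        _ ≤ |(X:ℝ)|^2 := by exact pow_le_pow_left₀ (by norm_num) h2 2
        _ = (X:ℝ)^2 := sq_abs _
    have hE1le : |E1| ≤ |(A:ℝ) * θ - (B:ℝ)| := by
      rw [← sq_le_sq, hsub]
      have c1 : (0:ℝ) ≤ ((X:ℝ)^2 - 1) * E1^2 := mul_nonneg (by linarith) (sq_nonneg _)
      have c2 : (0:ℝ) ≤ ((X:ℝ)*(Y:ℝ)) * (E1*E2) := le_of_lt (mul_pos_of_neg_of_neg hXYR hE1E2)
      have c3 : (0:ℝ) ≤ ((Y:ℝ)*E2)^2 := sq_nonneg _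
      linarith [c1, c2, c3]
    -- the contradiction
    have hYne : B * Q (k+1) - A * P (k+1) ≠ 0 := by
      intro h
      apply hY
      rw [hYdef, h, mul_zero]
    have hy1 : 1 ≤ |B * Q (k+1) - A * P (k+1)| := Int.one_le_abs hYne
    have hy1R : (1:ℝ) ≤ |(B:ℝ) * (Q (k+1):ℝ) - (A:ℝ) * (P (k+1):ℝ)| := by
      exact_mod_cast hy1
    have hrepr : (B:ℝ) * (Q (k+1):ℝ) - (A:ℝ) * (P (k+1):ℝ)
        = (Q (k+1):ℝ) * ((B:ℝ) - (A:ℝ) * θ) + (A:ℝ) * E1 := by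
      rw [hE1def]; ring
    have hQleA : (Q (k+1):ℝ) ≤ |(A:ℝ)| := by
      have : ((Q (k+1)):ℝ) ≤ ((|A|:ℤ):ℝ) := by exact_mod_cast hk1
      rwa [Int.cast_abs] at this
    have habs1 : |(Q (k+1):ℝ) * ((B:ℝ) - (A:ℝ) * θ) + (A:ℝ) * E1|
        ≤ (Q (k+1):ℝ) * |(A:ℝ) * θ - (B:ℝ)| + |(A:ℝ)| * |E1| := by
      calc |(Q (k+1):ℝ) * ((B:ℝ) - (A:ℝ) * θ) + (A:ℝ) * E1|
          ≤ |(Q (k+1):ℝ) * ((B:ℝ) - (A:ℝ) * θ)| + |(A:ℝ) * E1| := abs_add_le _ _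
        _ = (Q (k+1):ℝ) * |(A:ℝ) * θ - (B:ℝ)| + |(A:ℝ)| * |E1| := by
            rw [abs_mul, abs_mul, abs_of_pos (hQpos k), abs_sub_comm]
    rw [hrepr] at hy1R
    have hfin1 : (Q (k+1):ℝ) * |(A:ℝ) * θ - (B:ℝ)| ≤ |(A:ℝ)| * |(A:ℝ) * θ - (B:ℝ)| :=
      mul_le_mul_of_nonneg_right hQleA (abs_nonneg _)
    have hfin2 : |(A:ℝ)| * |E1| ≤ |(A:ℝ)| * |(A:ℝ) * θ - (B:ℝ)| :=
      mul_le_mul_of_nonneg_left hE1le (abs_nonneg _)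
    linarith [hy1R, habs1, hfin1, hfin2, hhalf]
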